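/- The map x ↦ J_n \ x is an involutive dual automorphism of the permutohedron P(n), sending each clopen set x to a lattice-theoretical complement of x in P(n). In particular, P(n) is a complemented lattice. -/

import Mathlib

/-- `J_n = {(i,j) : 1 ≤ i < j ≤ n}`. -/
def JnS (n : ℕ) : Set (ℕ × ℕ) := {p | 1 ≤ p.1 ∧ p.1 < p.2 ∧ p.2 ≤ n}

/-- Transitivity of a set of pairs, viewed as a binary relation. -/
def TransSet (x : Set (ℕ × ℕ)) : Prop := ∀ i j k : ℕ, (i, j) ∈ x → (j, k) ∈ x → (i, k) ∈ x

/-- A subset of `J_n` is closed if it is transitive. -/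
def ClosedIn (n : ℕ) (x : Set (ℕ × ℕ)) : Prop := x ⊆ JnS n ∧ TransSet x

/-- A subset of `J_n` is clopen if both it and its complement in `J_n` are closed. -/
def ClopenIn (n : ℕ) (x : Set (ℕ × ℕ)) : Prop := ClosedIn n x ∧ ClosedIn n (JnS n \ x)

/-- The transitive closure of a set of pairs. -/
def clS (x : Set (ℕ × ℕ)) : Set (ℕ × ℕ) :=
  {p | Relation.TransGen (fun a b => (a, b) ∈ x) p.1 p.2}

/-- The interior: the largest open subset of `x`. -/
def intS (n : ℕ) (x : Set (ℕ × ℕ)) : Set (ℕ × ℕ) := JnS n \ clS (JnS n \ x)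

lemma double_diff {n : ℕ} {x : Set (ℕ × ℕ)} (hx : x ⊆ JnS n) :
    JnS n \ (JnS n \ x) = x := by
  rw [Set.diff_diff_right, Set.diff_self, Set.empty_union, Set.inter_eq_right.mpr hx]

lemma clS_JnS (n : ℕ) : clS (JnS n) = JnS n := by
  have : Relation.TransGen (fun a b => ((a, b) : ℕ × ℕ) ∈ JnS n) =
      fun a b => ((a, b) : ℕ × ℕ) ∈ JnS n :=
    @Relation.transGen_eq_self _ _ ⟨fun a b c hab hbc =>
      ⟨hab.1, lt_trans hab.2.1 hbc.2.1, hbc.2.2⟩⟩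
  ext p
  simp only [clS, Set.mem_setOf_eq, this]

theorem stmt3 (n : ℕ) :
    (∀ x, ClopenIn n x → ClopenIn n (JnS n \ x)) ∧
    (∀ x, ClopenIn n x → JnS n \ (JnS n \ x) = x) ∧
    (∀ x y, ClopenIn n x → ClopenIn n y → (x ⊆ y ↔ JnS n \ y ⊆ JnS n \ x)) ∧
    (∀ x, ClopenIn n x →
      intS n (x ∩ (JnS n \ x)) = ∅ ∧ clS (x ∪ (JnS n \ x)) = JnS n) := by
  refine ⟨fun x hx => ⟨hx.2, ?_⟩, fun x hx => double_diff hx.1.1, ?_, fun x hx => ⟨?_, ?_⟩⟩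
  · rw [double_diff hx.1.1]; exact hx.1
  · intro x y hx hy
    constructor
    · intro h p hp; exact ⟨hp.1, fun hpy => hp.2 (h hpy)⟩
    · intro h p hp
      by_contra hpy
      exact (h ⟨hx.1.1 hp, hpy⟩).2 hp
  · have : x ∩ (JnS n \ x) = ∅ := by
      ext p; simp only [Set.mem_inter_iff, Set.mem_diff, Set.mem_empty_iff_false, iff_false]
      rintro ⟨h1, _, h2⟩; exact h2 h1
    rw [intS, this, Set.diff_empty, clS_JnS, Set.diff_self]
  · have : x ∪ (JnS n \ x) = JnS n := Set.union_diff_cancel hx.1.1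
    rw [this, clS_JnS]
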